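/- The function p satisfies: (i) p(w',w) = conjugate of p(w,w') for all w, w' ∈ Y; (ii) for every w ∈ Y the fiber F(w) = {w'' ∈ Y : ψ(w'') = ψ(w)} is finite; (iii) for all w, w' ∈ Y, the finite sum ∑_{w'' ∈ F(w)} p(w,w'')·p(w'',w') equals p(w,w') (i.e., p is idempotent for the convolution product); and (iv) for every x ∈ X there exist w, w' ∈ Y with ψ(w) = ψ(w') = x and p(w,w') ≠ 0. -/

import Mathlib

noncomputable section

/-- The 2-sphere, realized as the unit sphere `{(c,z) : |c|² + z² = 1}` in `ℂ × ℝ`,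
with the subspace topology. -/
def TwoSphere : Set (ℂ × ℝ) := {p | ‖p.1‖ ^ 2 + p.2 ^ 2 = 1}

/-- The relation `r₀` on `S²`: `r₀ (c,z) (c',z')` iff `z ≠ 0`, `c' = -c` and `z' = z`. -/
def sphRel (a b : TwoSphere) : Prop :=
  a.1.2 ≠ 0 ∧ b.1.1 = -a.1.1 ∧ b.1.2 = a.1.2

/-- The twisted sphere `X`: the quotient of `S²` by the equivalence relation generated
by `r₀`, with the quotient topology. -/
abbrev TwistedSphere : Type := Quot (Relation.EqvGen sphRel)

/-- The quotient map `q : S² → X`. -/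
abbrev sphQ : TwoSphere → TwistedSphere := Quot.mk (Relation.EqvGen sphRel)

/-- `V = S² ∖ E`: the points of the sphere whose `ℝ`-coordinate is nonzero
(the sphere minus the equator). -/
def sphV : Set TwoSphere := {p | p.1.2 ≠ 0}

/-- The (discontinuous) "angle halving" map `α : V → S²`,
`α(c,z) = (√|c| · c^{1/2}, z)` where `c^{1/2}` is the principal complex square root.
It fixes the two poles, where `c = 0`. -/
def sphAlpha (v : sphV) : TwoSphere :=
  ⟨((Real.sqrt ‖v.1.1.1‖ : ℂ) * v.1.1.1 ^ (1/2 : ℂ), v.1.1.2), by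
    obtain ⟨⟨⟨c, z⟩, hmem⟩, -⟩ := v
    simp only [TwoSphere, Set.mem_setOf_eq] at hmem ⊢
    have h1 : ‖((Real.sqrt ‖c‖ : ℂ) * c ^ (1/2 : ℂ))‖
        = ‖c‖ := by
      rw [norm_mul, Complex.norm_real, Real.norm_of_nonneg (Real.sqrt_nonneg _)]
      have h2 : (1/2 : ℂ) = ((1/2 : ℝ) : ℂ) := by norm_num
      rw [h2, Complex.norm_cpow_real, ← Real.sqrt_eq_rpow,
        Real.mul_self_sqrt (norm_nonneg _)]
    rw [h1, hmem]⟩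

/-- `U = S² ∖ {poles}`: the points of the sphere whose `ℂ`-coordinate is nonzero. -/
def sphU : Set TwoSphere := {p | p.1.1 ≠ 0}

/-- `Y = U ⊔ V ⊔ V`, the disjoint union of `U` and two copies of `V`, with the
disjoint-union topology. -/
abbrev sphY : Type := sphU ⊕ (sphV ⊕ sphV)

/-- The map `ψ : Y → X`, equal to `q` on the `U` summand and to `q ∘ α` on each of the
two copies of `V`. -/
def sphPsi : sphY → TwistedSphere :=
  Sum.elim (fun u => sphQ u.1)
    (Sum.elim (fun v => sphQ (sphAlpha v)) (fun v => sphQ (sphAlpha v)))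


/-- The quantity `√(½ |z| (1 - |z|))`. -/
def halfSq (z : ℝ) : ℝ := Real.sqrt (1/2 * |z| * (1 - |z|))

open Classical in
/-- The function `p : Y × Y → ℂ` of STATEMENT 13: it vanishes on pairs with
`ψ(w) ≠ ψ(w')`, and on pairs with `ψ(w) = ψ(w')` it is given by the case analysis of
the context, where `z` denotes the `ℝ`-coordinate and `c` the `ℂ`-coordinate of the
underlying point of `S²`. -/
noncomputable def sphP : sphY → sphY → ℂ := fun w w' =>
  if sphPsi w = sphPsi w' then
    match w, w' with
    | Sum.inl u, Sum.inl u' => if u = u' then ((1 - |u.1.1.2| : ℝ) : ℂ) else 0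
    | Sum.inl u, Sum.inr (Sum.inl _) => ((halfSq u.1.1.2 : ℝ) : ℂ)
    | Sum.inr (Sum.inl _), Sum.inl u => ((halfSq u.1.1.2 : ℝ) : ℂ)
    | Sum.inl u, Sum.inr (Sum.inr _) =>
        (starRingEnd ℂ u.1.1.1 / (‖u.1.1.1‖ : ℂ)) * ((halfSq u.1.1.2 : ℝ) : ℂ)
    | Sum.inr (Sum.inr _), Sum.inl u =>
        (u.1.1.1 / (‖u.1.1.1‖ : ℂ)) * ((halfSq u.1.1.2 : ℝ) : ℂ)
    | Sum.inr (Sum.inl v), Sum.inr (Sum.inl v') =>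
        if v = v' then ((|v.1.1.2| : ℝ) : ℂ) else 0
    | Sum.inr (Sum.inr v), Sum.inr (Sum.inr v') =>
        if v = v' then ((|v.1.1.2| : ℝ) : ℂ) else 0
    | Sum.inr (Sum.inl _), Sum.inr (Sum.inr _) => 0
    | Sum.inr (Sum.inr _), Sum.inr (Sum.inl _) => 0
  else 0

namespace SphAux

lemma memS (a : TwoSphere) : ‖a.1.1‖ ^ 2 + a.1.2 ^ 2 = 1 := a.2

lemma absz_le_one (a : TwoSphere) : |a.1.2| ≤ 1 := by
  have h := memS a
  nlinarith [sq_nonneg (‖a.1.1‖), abs_nonneg a.1.2, sq_abs a.1.2]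

/-- negation of the complex coordinate, as a self-map of the sphere -/
def negS (a : TwoSphere) : TwoSphere :=
  ⟨(-a.1.1, a.1.2), by
    have h := a.2
    simpa only [TwoSphere, Set.mem_setOf_eq, map_neg_eq_map, norm_neg] using h⟩

@[simp] lemma negS_c (a : TwoSphere) : (negS a).1.1 = -a.1.1 := rfl
@[simp] lemma negS_z (a : TwoSphere) : (negS a).1.2 = a.1.2 := rfl

lemma negS_negS (a : TwoSphere) : negS (negS a) = a := by
  apply Subtype.ext
  simp [negS]

/-- the explicit equivalence relation generated by `sphRel` -/
def eRel (a b : TwoSphere) : Prop := a = b ∨ (a.1.2 ≠ 0 ∧ b = negS a)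

lemma eRel_z {a b : TwoSphere} (h : eRel a b) : a.1.2 = b.1.2 := by
  rcases h with rfl | ⟨_, rfl⟩ <;> simp

lemma eRel_equiv : Equivalence eRel := by
  constructor
  · intro a; exact Or.inl rfl
  · rintro a b (rfl | ⟨hz, rfl⟩)
    · exact Or.inl rfl
    · exact Or.inr ⟨by simpa using hz, (negS_negS a).symm⟩
  · rintro a b c (rfl | ⟨hz, rfl⟩) h2
    · exact h2
    · rcases h2 with rfl | ⟨hz2, rfl⟩
      · exact Or.inr ⟨hz, rfl⟩
      · exact Or.inl (negS_negS a).symm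

lemma eqvGen_le {α : Type*} {r e : α → α → Prop} (he : Equivalence e)
    (h : ∀ a b, r a b → e a b) : ∀ a b, Relation.EqvGen r a b → e a b := by
  intro a b hab
  induction hab with
  | rel x y h' => exact h _ _ h'
  | refl x => exact he.refl x
  | symm x y _ ih => exact he.symm ih
  | trans x y z _ _ ih1 ih2 => exact he.trans ih1 ih2

lemma quot_eq_iff (a b : TwoSphere) : sphQ a = sphQ b ↔ eRel a b := by
  constructor
  · intro h
    have h1 := Quot.eq.mp h
    refine eqvGen_le eRel_equiv ?_ a b h1
    intro x y hxy
    refine eqvGen_le eRel_equiv ?_ x y hxy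
    rintro u v ⟨hz, hc, hz2⟩
    exact Or.inr ⟨hz, Subtype.ext (Prod.ext hc hz2)⟩
  · rintro (rfl | ⟨hz, rfl⟩)
    · rfl
    · exact Quot.sound (Relation.EqvGen.rel _ _ ⟨hz, rfl, rfl⟩)

/-- `α` basic coordinates -/
lemma alpha_c (v : sphV) :
    (sphAlpha v).1.1 = (Real.sqrt (‖v.1.1.1‖) : ℂ) * v.1.1.1 ^ (1/2 : ℂ) := rfl

lemma alpha_z (v : sphV) : (sphAlpha v).1.2 = v.1.1.2 := rfl

lemma alpha_sq (v : sphV) :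
    (sphAlpha v).1.1 ^ 2 = (‖v.1.1.1‖ : ℂ) * v.1.1.1 := by
  rw [alpha_c, mul_pow]
  have h2 : (1/2 : ℂ) = ((2:ℕ) : ℂ)⁻¹ := by norm_num
  rw [h2, Complex.cpow_nat_inv_pow _ two_ne_zero]
  congr 1
  rw [← Complex.ofReal_pow, Real.sq_sqrt (norm_nonneg _)]

lemma alpha_abs (v : sphV) :
    ‖(sphAlpha v).1.1‖ = ‖v.1.1.1‖ := by
  have h := congrArg (‖·‖) (alpha_sq v)
  rw [norm_pow, norm_mul, Complex.norm_real, Real.norm_of_nonneg (norm_nonneg _)] at h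
  have h2 : ‖(sphAlpha v).1.1‖ ^ 2 = ‖v.1.1.1‖ ^ 2 := by
    rw [h]; ring
  have := congrArg Real.sqrt h2
  rwa [Real.sqrt_sq (norm_nonneg _), Real.sqrt_sq (norm_nonneg _)] at this

lemma absMul_inj {x y : ℂ}
    (h : (‖x‖ : ℂ) * x = (‖y‖ : ℂ) * y) : x = y := by
  have habs : ‖x‖ = ‖y‖ := by
    have h' := congrArg (‖·‖) h
    rw [norm_mul, norm_mul, Complex.norm_real, Complex.norm_real,
      Real.norm_of_nonneg (norm_nonneg _), Real.norm_of_nonneg (norm_nonneg _)] at h'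
    nlinarith [norm_nonneg x, norm_nonneg y]
  by_cases hx : x = 0
  · have : ‖y‖ = 0 := by rw [← habs, hx, norm_zero]
    rw [hx, (norm_eq_zero.mp this)]
  · have hax : (‖x‖ : ℂ) ≠ 0 := by
      simpa [Complex.ofReal_eq_zero] using (norm_ne_zero_iff.mpr hx)
    rw [habs] at h
    exact mul_left_cancel₀ (by rwa [← habs]) h

/-- the canonical preimage of (the class of) `a` under `α` -/
def betaV (a : TwoSphere) (hz : a.1.2 ≠ 0) : sphV :=
  ⟨⟨(a.1.1 ^ 2 / (‖a.1.1‖ : ℂ), a.1.2), by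
    have h := a.2
    simp only [TwoSphere, Set.mem_setOf_eq] at h ⊢
    rcases eq_or_ne a.1.1 0 with hc | hc
    · simpa [hc] using h
    · have hac : ‖a.1.1‖ ≠ 0 := (norm_ne_zero_iff.mpr hc)
      have h2 : ‖(a.1.1 ^ 2 / (‖a.1.1‖ : ℂ))‖ = ‖a.1.1‖ := by
        rw [norm_div, norm_pow, Complex.norm_real, Real.norm_of_nonneg (norm_nonneg _),
          sq, mul_div_assoc, div_self hac, mul_one]
      rw [h2]; exact h⟩, hz⟩

@[simp] lemma betaV_z (a : TwoSphere) (hz : a.1.2 ≠ 0) : (betaV a hz).1.1.2 = a.1.2 := rfl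

lemma betaV_c (a : TwoSphere) (hz : a.1.2 ≠ 0) :
    (betaV a hz).1.1.1 = a.1.1 ^ 2 / (‖a.1.1‖ : ℂ) := rfl

lemma betaV_abs (a : TwoSphere) (hz : a.1.2 ≠ 0) :
    ‖(betaV a hz).1.1.1‖ = ‖a.1.1‖ := by
  rcases eq_or_ne a.1.1 0 with hc | hc
  · simp [betaV_c, hc]
  · have hac : ‖a.1.1‖ ≠ 0 := (norm_ne_zero_iff.mpr hc)
    rw [betaV_c, norm_div, norm_pow, Complex.norm_real,
      Real.norm_of_nonneg (norm_nonneg _), sq, mul_div_assoc, div_self hac, mul_one]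

lemma alpha_betaV_sq (a : TwoSphere) (hz : a.1.2 ≠ 0) :
    ((sphAlpha (betaV a hz)).1.1) ^ 2 = a.1.1 ^ 2 := by
  rw [alpha_sq, betaV_abs, betaV_c]
  rcases eq_or_ne a.1.1 0 with hc | hc
  · simp [hc]
  · have hac : (‖a.1.1‖ : ℂ) ≠ 0 := by
      simpa [Complex.ofReal_eq_zero] using (norm_ne_zero_iff.mpr hc)
    field_simp

lemma alpha_betaV (a : TwoSphere) (hz : a.1.2 ≠ 0) :
    sphAlpha (betaV a hz) = a ∨ sphAlpha (betaV a hz) = negS a := by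
  have hsq := alpha_betaV_sq a hz
  rw [sq, sq] at hsq
  rcases mul_self_eq_mul_self_iff.mp hsq with h | h
  · left; exact Subtype.ext (Prod.ext h (alpha_z _))
  · right; exact Subtype.ext (Prod.ext h (alpha_z _))

lemma eq_betaV_of_alpha {a : TwoSphere} {v : sphV} (hz : a.1.2 ≠ 0)
    (h : sphAlpha v = a ∨ sphAlpha v = negS a) : v = betaV a hz := by
  have hsq : (‖v.1.1.1‖ : ℂ) * v.1.1.1 = a.1.1 ^ 2 := by
    rcases h with h | h
    · rw [← alpha_sq, h]
    · rw [← alpha_sq, h]; simp [sq]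
  have hsq' : (‖(betaV a hz).1.1.1‖ : ℂ) * (betaV a hz).1.1.1 = a.1.1 ^ 2 := by
    rw [betaV_abs, betaV_c]
    rcases eq_or_ne a.1.1 0 with hc | hc
    · simp [hc]
    · have hac : (‖a.1.1‖ : ℂ) ≠ 0 := by
        simpa [Complex.ofReal_eq_zero] using (norm_ne_zero_iff.mpr hc)
      field_simp
  have hc : v.1.1.1 = (betaV a hz).1.1.1 := absMul_inj (by rw [hsq, hsq'])
  have hzz : v.1.1.2 = a.1.2 := by
    rcases h with h | h
    · rw [← alpha_z v, h]
    · rw [← alpha_z v, h]; rfl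
  exact Subtype.ext (Subtype.ext (Prod.ext hc hzz))

/-- base point of an element of `Y` -/
def base : sphY → TwoSphere :=
  Sum.elim (fun u => u.1) (Sum.elim (fun v => sphAlpha v) (fun v => sphAlpha v))

lemma psi_def (w : sphY) : sphPsi w = sphQ (base w) := by
  rcases w with u | v | v <;> rfl

lemma alpha_c_of_zero (v : sphV) (h : v.1.1.1 = 0) : sphAlpha v = v.1 := by
  apply Subtype.ext
  apply Prod.ext
  · rw [alpha_c, h]; simp
  · exact alpha_z v

lemma negS_self (a : TwoSphere) (hc : a.1.1 = 0) : negS a = a := by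
  apply Subtype.ext
  apply Prod.ext
  · rw [negS_c, hc, neg_zero]
  · rfl

lemma fib_eq (a : TwoSphere) (hz : a.1.2 = 0) (hc : a.1.1 ≠ 0) :
    {w : sphY | sphPsi w = sphQ a} = {Sum.inl ⟨a, hc⟩} := by
  ext w
  simp only [Set.mem_setOf_eq, Set.mem_singleton_iff]
  constructor
  · intro h
    rw [psi_def, quot_eq_iff] at h
    have hbz : (base w).1.2 = 0 := by rw [eRel_z h, hz]
    have hba : base w = a := by
      rcases h with h | ⟨hz', _⟩
      · exact h
      · exact absurd hbz hz'
    rcases w with u | v | v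
    · exact congrArg Sum.inl (Subtype.ext hba)
    · exact absurd hbz v.2
    · exact absurd hbz v.2
  · rintro rfl; rfl

lemma q_negS (a : TwoSphere) (hz : a.1.2 ≠ 0) : sphQ (negS a) = sphQ a := by
  rw [quot_eq_iff]
  exact Or.inr ⟨by simpa using hz, (negS_negS a).symm⟩

lemma fib_pole (a : TwoSphere) (hz : a.1.2 ≠ 0) (hc : a.1.1 = 0) :
    {w : sphY | sphPsi w = sphQ a}
      = {Sum.inr (Sum.inl ⟨a, hz⟩), Sum.inr (Sum.inr ⟨a, hz⟩)} := by
  have halpha : sphAlpha (⟨a, hz⟩ : sphV) = a := alpha_c_of_zero _ hc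
  ext w
  simp only [Set.mem_setOf_eq, Set.mem_insert_iff, Set.mem_singleton_iff]
  constructor
  · intro h
    rw [psi_def, quot_eq_iff] at h
    have hba : base w = a := by
      rcases h with h | ⟨hz', h⟩
      · exact h
      · have h2 : base w = negS a := by rw [h, negS_negS]
        rw [negS_self a hc] at h2; exact h2
    rcases w with u | v | v
    · exact absurd (show u.1.1.1 = 0 by rw [show base (Sum.inl u) = u.1 from rfl] at hba; rw [hba, hc]) u.2
    · left
      have := eq_betaV_of_alpha hz (Or.inl hba)
      have hb : betaV a hz = ⟨a, hz⟩ := by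
        apply Subtype.ext; apply Subtype.ext; apply Prod.ext
        · rw [betaV_c, hc]; simp
        · rfl
      rw [this, hb]
    · right
      have := eq_betaV_of_alpha hz (Or.inl hba)
      have hb : betaV a hz = ⟨a, hz⟩ := by
        apply Subtype.ext; apply Subtype.ext; apply Prod.ext
        · rw [betaV_c, hc]; simp
        · rfl
      rw [this, hb]
  · rintro (rfl | rfl) <;>
    · show sphQ (sphAlpha _) = sphQ a
      rw [halpha]

lemma negS_mem_U {a : TwoSphere} (hc : a.1.1 ≠ 0) : negS a ∈ sphU := by
  simp only [sphU, Set.mem_setOf_eq, negS_c, ne_eq, neg_eq_zero]; exact hc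

lemma q_alpha_betaV (a : TwoSphere) (hz : a.1.2 ≠ 0) :
    sphQ (sphAlpha (betaV a hz)) = sphQ a := by
  rcases alpha_betaV a hz with h | h
  · rw [h]
  · rw [h]; exact q_negS a hz

lemma fib_gen (a : TwoSphere) (hz : a.1.2 ≠ 0) (hc : a.1.1 ≠ 0)
    (hc' : negS a ∈ sphU) :
    {w : sphY | sphPsi w = sphQ a}
      = {Sum.inl ⟨a, hc⟩, Sum.inl ⟨negS a, hc'⟩,
         Sum.inr (Sum.inl (betaV a hz)), Sum.inr (Sum.inr (betaV a hz))} := by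
  ext w
  simp only [Set.mem_setOf_eq, Set.mem_insert_iff, Set.mem_singleton_iff]
  constructor
  · intro h
    rw [psi_def, quot_eq_iff] at h
    have hba : base w = a ∨ base w = negS a := by
      rcases h with h | ⟨hz', h⟩
      · exact Or.inl h
      · right; rw [h]; exact (negS_negS _).symm
    rcases w with u | v | v
    · rcases hba with h | h
      · left; exact congrArg Sum.inl (Subtype.ext h)
      · right; left; exact congrArg Sum.inl (Subtype.ext h)
    · right; right; left
      exact congrArg (fun x => Sum.inr (Sum.inl x)) (eq_betaV_of_alpha hz hba)
    · right; right; right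
      exact congrArg (fun x => Sum.inr (Sum.inr x)) (eq_betaV_of_alpha hz hba)
  · rintro (rfl | rfl | rfl | rfl)
    · rfl
    · exact q_negS a hz
    · show sphQ (sphAlpha _) = sphQ a
      rcases alpha_betaV a hz with h | h
      · rw [h]
      · rw [h]; exact q_negS a hz
    · show sphQ (sphAlpha _) = sphQ a
      rcases alpha_betaV a hz with h | h
      · rw [h]
      · rw [h]; exact q_negS a hz

-- evaluation lemmas for sphP
lemma P_ne {w w' : sphY} (h : sphPsi w ≠ sphPsi w') : sphP w w' = 0 := by
  rw [sphP.eq_def, if_neg h]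

lemma P_uu {u u' : sphU} (h : sphPsi (Sum.inl u) = sphPsi (Sum.inl u')) :
    sphP (Sum.inl u) (Sum.inl u')
      = if u = u' then ((1 - |u.1.1.2| : ℝ) : ℂ) else 0 := by
  rw [sphP, if_pos h]

lemma P_uv1 {u : sphU} {v : sphV}
    (h : sphPsi (Sum.inl u) = sphPsi (Sum.inr (Sum.inl v))) :
    sphP (Sum.inl u) (Sum.inr (Sum.inl v)) = ((halfSq u.1.1.2 : ℝ) : ℂ) := by
  rw [sphP, if_pos h]

lemma P_v1u {u : sphU} {v : sphV}
    (h : sphPsi (Sum.inr (Sum.inl v)) = sphPsi (Sum.inl u)) :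
    sphP (Sum.inr (Sum.inl v)) (Sum.inl u) = ((halfSq u.1.1.2 : ℝ) : ℂ) := by
  rw [sphP, if_pos h]

lemma P_uv2 {u : sphU} {v : sphV}
    (h : sphPsi (Sum.inl u) = sphPsi (Sum.inr (Sum.inr v))) :
    sphP (Sum.inl u) (Sum.inr (Sum.inr v))
      = (starRingEnd ℂ u.1.1.1 / (‖u.1.1.1‖ : ℂ)) * ((halfSq u.1.1.2 : ℝ) : ℂ) := by
  rw [sphP, if_pos h]

lemma P_v2u {u : sphU} {v : sphV}
    (h : sphPsi (Sum.inr (Sum.inr v)) = sphPsi (Sum.inl u)) :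
    sphP (Sum.inr (Sum.inr v)) (Sum.inl u)
      = (u.1.1.1 / (‖u.1.1.1‖ : ℂ)) * ((halfSq u.1.1.2 : ℝ) : ℂ) := by
  rw [sphP, if_pos h]

lemma P_v1v1 {v v' : sphV}
    (h : sphPsi (Sum.inr (Sum.inl v)) = sphPsi (Sum.inr (Sum.inl v'))) :
    sphP (Sum.inr (Sum.inl v)) (Sum.inr (Sum.inl v'))
      = if v = v' then ((|v.1.1.2| : ℝ) : ℂ) else 0 := by
  rw [sphP, if_pos h]

lemma P_v2v2 {v v' : sphV}
    (h : sphPsi (Sum.inr (Sum.inr v)) = sphPsi (Sum.inr (Sum.inr v'))) :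
    sphP (Sum.inr (Sum.inr v)) (Sum.inr (Sum.inr v'))
      = if v = v' then ((|v.1.1.2| : ℝ) : ℂ) else 0 := by
  rw [sphP, if_pos h]

lemma P_v1v2 {v v' : sphV} :
    sphP (Sum.inr (Sum.inl v)) (Sum.inr (Sum.inr v')) = 0 := by
  rw [sphP]
  split <;> rfl

lemma P_v2v1 {v v' : sphV} :
    sphP (Sum.inr (Sum.inr v)) (Sum.inr (Sum.inl v')) = 0 := by
  rw [sphP]
  split <;> rfl

end SphAux

/-- the function `p` satisfies: (i) `p(w',w) = conj (p(w,w'))`;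
(ii) every fiber `F(w) = {w'' : ψ(w'') = ψ(w)}` is finite; (iii) `p` is idempotent for
the convolution product, i.e. `∑_{w'' ∈ F(w)} p(w,w'') p(w'',w') = p(w,w')`; and
(iv) for every `x ∈ X` there are `w, w'` with `ψ(w) = ψ(w') = x` and `p(w,w') ≠ 0`. -/
theorem stmt_13 :
    (∀ w w' : sphY, sphP w' w = starRingEnd ℂ (sphP w w')) ∧
    (∀ w : sphY, {w'' : sphY | sphPsi w'' = sphPsi w}.Finite) ∧
    (∀ w w' : sphY,
      ∑ᶠ w'' ∈ {w'' : sphY | sphPsi w'' = sphPsi w}, sphP w w'' * sphP w'' w'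
        = sphP w w') ∧
    (∀ x : TwistedSphere, ∃ w w' : sphY,
      sphPsi w = x ∧ sphPsi w' = x ∧ sphP w w' ≠ 0) := by
  classical
  open SphAux in
  refine ⟨?_, ?_, ?_, ?_⟩
  · -- (i) hermitian symmetry
    intro w w'
    by_cases h : sphPsi w = sphPsi w'
    · rcases w with u | v | v <;> rcases w' with u' | v' | v'
      · rw [P_uu h, P_uu h.symm]
        by_cases he : u = u'
        · subst he; simp [Complex.conj_ofReal]
        · simp [he, Ne.symm he]
      · rw [P_uv1 h, P_v1u h.symm, Complex.conj_ofReal]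
      · rw [P_uv2 h, P_v2u h.symm]
        simp [map_div₀, Complex.conj_ofReal, Complex.conj_conj]
      · rw [P_v1u h, P_uv1 h.symm, Complex.conj_ofReal]
      · rw [P_v1v1 h, P_v1v1 h.symm]
        by_cases he : v = v'
        · subst he; simp [Complex.conj_ofReal]
        · simp [he, Ne.symm he]
      · rw [P_v1v2, P_v2v1, map_zero]
      · rw [P_v2u h, P_uv2 h.symm]
        simp [map_div₀, Complex.conj_ofReal, Complex.conj_conj]
      · rw [P_v2v1, P_v1v2, map_zero]
      · rw [P_v2v2 h, P_v2v2 h.symm]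
        by_cases he : v = v'
        · subst he; simp [Complex.conj_ofReal]
        · simp [he, Ne.symm he]
    · rw [P_ne h, P_ne (Ne.symm h), map_zero]
  · -- (ii) finite fibers
    intro w
    rw [psi_def w]
    by_cases hz : (base w).1.2 = 0
    · have hc : (base w).1.1 ≠ 0 := by
        intro h0
        have hm := memS (base w)
        rw [hz, h0] at hm
        simp at hm
      rw [fib_eq _ hz hc]
      exact Set.finite_singleton _
    · by_cases hc : (base w).1.1 = 0
      · rw [fib_pole _ hz hc]
        exact (Set.finite_singleton _).insert _
      · rw [fib_gen _ hz hc (negS_mem_U hc)]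
        exact (((Set.finite_singleton _).insert _).insert _).insert _
  · -- (iii) convolution idempotence
    intro w w'
    by_cases hw' : sphPsi w' = sphPsi w
    · obtain ⟨a, hma⟩ : ∃ a, sphPsi w = sphQ a := ⟨base w, psi_def w⟩
      by_cases hz : a.1.2 = 0
      · have hc : a.1.1 ≠ 0 := by
          intro h0
          have hm := memS a
          rw [hz, h0] at hm
          simp at hm
        have hfib : {w'' : sphY | sphPsi w'' = sphPsi w} = {Sum.inl ⟨a, hc⟩} := by
          rw [hma, fib_eq a hz hc]
        have hwmem : w ∈ {w'' : sphY | sphPsi w'' = sphPsi w} := rfl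
        have hw'mem : w' ∈ {w'' : sphY | sphPsi w'' = sphPsi w} := hw'
        rw [hfib] at hwmem hw'mem
        simp only [Set.mem_singleton_iff] at hwmem hw'mem
        subst hwmem; subst hw'mem
        rw [hfib, finsum_mem_singleton, P_uu rfl, if_pos rfl]
        push_cast
        rw [show ((⟨a, hc⟩ : sphU) : TwoSphere).1.2 = a.1.2 from rfl, hz]
        norm_num
      · by_cases hc : a.1.1 = 0
        · -- pole case
          have hT : |a.1.2| = 1 := by
            have hm := memS a
            rw [hc] at hm
            simp only [map_zero, norm_zero] at hm
            nlinarith [abs_nonneg a.1.2, sq_abs a.1.2]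
          have hfib : {w'' : sphY | sphPsi w'' = sphPsi w}
              = {Sum.inr (Sum.inl ⟨a, hz⟩), Sum.inr (Sum.inr ⟨a, hz⟩)} := by
            rw [hma, fib_pole a hz hc]
          have hwmem : w ∈ {w'' : sphY | sphPsi w'' = sphPsi w} := rfl
          have hw'mem : w' ∈ {w'' : sphY | sphPsi w'' = sphPsi w} := hw'
          rw [hfib] at hwmem hw'mem
          have halpha : sphAlpha (⟨a, hz⟩ : sphV) = a := alpha_c_of_zero _ hc
          have hq3 : sphPsi (Sum.inr (Sum.inl (⟨a, hz⟩ : sphV))) = sphQ a := by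
            show sphQ (sphAlpha _) = sphQ a; rw [halpha]
          have hq4 : sphPsi (Sum.inr (Sum.inr (⟨a, hz⟩ : sphV))) = sphQ a := by
            show sphQ (sphAlpha _) = sphQ a; rw [halpha]
          have hne : (Sum.inr (Sum.inl ⟨a, hz⟩) : sphY) ≠ Sum.inr (Sum.inr ⟨a, hz⟩) := by
            simp
          have hcoe : ({Sum.inr (Sum.inl ⟨a, hz⟩), Sum.inr (Sum.inr ⟨a, hz⟩)} : Set sphY)
              = (({Sum.inr (Sum.inl ⟨a, hz⟩), Sum.inr (Sum.inr ⟨a, hz⟩)} : Finset sphY) : Set sphY) := by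
            simp
          rw [hfib, hcoe, finsum_mem_coe_finset,
            Finset.sum_insert (by simpa using hne), Finset.sum_singleton]
          rcases hwmem with rfl | rfl <;> rcases hw'mem with rfl | rfl <;>
            simp only [P_v1v1 (hq3.trans hq3.symm), P_v2v2 (hq4.trans hq4.symm),
              P_v1v2, P_v2v1, if_pos rfl] <;>
          · show _ = _
            rw [show ((⟨a, hz⟩ : sphV) : TwoSphere).1.2 = a.1.2 from rfl, hT]
            norm_num
        · -- generic case
          have hc' : negS a ∈ sphU := negS_mem_U hc
          set u₁ : sphU := ⟨a, hc⟩ with hu₁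
          set u₂ : sphU := ⟨negS a, hc'⟩ with hu₂
          set v₀ : sphV := betaV a hz with hv₀
          have hfib : {w'' : sphY | sphPsi w'' = sphPsi w}
              = {Sum.inl u₁, Sum.inl u₂, Sum.inr (Sum.inl v₀), Sum.inr (Sum.inr v₀)} := by
            rw [hma, fib_gen a hz hc hc']
          have hwmem : w ∈ {w'' : sphY | sphPsi w'' = sphPsi w} := rfl
          have hw'mem : w' ∈ {w'' : sphY | sphPsi w'' = sphPsi w} := hw'
          rw [hfib] at hwmem hw'mem
          simp only [Set.mem_insert_iff, Set.mem_singleton_iff] at hwmem hw'mem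
          have hq1 : sphPsi (Sum.inl u₁) = sphQ a := rfl
          have hq2 : sphPsi (Sum.inl u₂) = sphQ a := q_negS a hz
          have hq3 : sphPsi (Sum.inr (Sum.inl v₀)) = sphQ a := q_alpha_betaV a hz
          have hq4 : sphPsi (Sum.inr (Sum.inr v₀)) = sphQ a := q_alpha_betaV a hz
          have hune : u₁ ≠ u₂ := by
            intro h
            have h2 := congrArg (fun u : sphU => (u : TwoSphere).1.1) h
            simp only [hu₁, hu₂, negS_c] at h2
            apply hc
            have h4 : (2 : ℂ) * a.1.1 = 0 := by linear_combination h2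
            rcases mul_eq_zero.mp h4 with h5 | h5
            · exact absurd h5 two_ne_zero
            · exact h5
          have hune' : u₂ ≠ u₁ := Ne.symm hune
          have hcoe : ({Sum.inl u₁, Sum.inl u₂, Sum.inr (Sum.inl v₀), Sum.inr (Sum.inr v₀)} : Set sphY)
              = (({Sum.inl u₁, Sum.inl u₂, Sum.inr (Sum.inl v₀), Sum.inr (Sum.inr v₀)} : Finset sphY) : Set sphY) := by
            simp
          rw [hfib, hcoe, finsum_mem_coe_finset,
            Finset.sum_insert (by simp [hune]), Finset.sum_insert (by simp),
            Finset.sum_insert (by simp), Finset.sum_singleton]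
          -- coordinate facts
          have hz1 : ((u₁ : TwoSphere) : ℂ × ℝ).2 = a.1.2 := rfl
          have hz2 : ((u₂ : TwoSphere) : ℂ × ℝ).2 = a.1.2 := rfl
          have hzv : ((v₀ : TwoSphere) : ℂ × ℝ).2 = a.1.2 := rfl
          have hc1 : ((u₁ : TwoSphere) : ℂ × ℝ).1 = a.1.1 := rfl
          have hc2 : ((u₂ : TwoSphere) : ℂ × ℝ).1 = -a.1.1 := rfl
          have hS : ((halfSq a.1.2 : ℝ) : ℂ) * ((halfSq a.1.2 : ℝ) : ℂ)
              = (|a.1.2| : ℝ) * (1 - (|a.1.2| : ℝ)) / 2 := by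
            have h0 : 0 ≤ 1/2 * |a.1.2| * (1 - |a.1.2|) := by
              have h1 := absz_le_one a
              have h2 := abs_nonneg a.1.2
              nlinarith
            have h1 : halfSq a.1.2 ^ 2 = 1/2 * |a.1.2| * (1 - |a.1.2|) :=
              Real.sq_sqrt h0
            rw [← Complex.ofReal_mul, ← sq, h1]
            push_cast
            ring
          have hA : ((‖a.1.1‖ : ℝ) : ℂ) ≠ 0 := by
            simpa [Complex.ofReal_eq_zero] using (norm_ne_zero_iff.mpr hc)
          have hDC : (starRingEnd ℂ a.1.1 / ((‖a.1.1‖ : ℝ) : ℂ))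
              * (a.1.1 / ((‖a.1.1‖ : ℝ) : ℂ)) = 1 := by
            rw [div_mul_div_comm, mul_comm, Complex.mul_conj, ← Complex.sq_norm]
            push_cast
            field_simp
          rcases hwmem with rfl | rfl | rfl | rfl <;>
            rcases hw'mem with rfl | rfl | rfl | rfl <;>
            simp only [P_uu (hq1.trans hq1.symm), P_uu (hq1.trans hq2.symm),
              P_uu (hq2.trans hq1.symm), P_uu (hq2.trans hq2.symm),
              P_uv1 (hq1.trans hq3.symm), P_uv1 (hq2.trans hq3.symm),
              P_v1u (hq3.trans hq1.symm), P_v1u (hq3.trans hq2.symm),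
              P_uv2 (hq1.trans hq4.symm), P_uv2 (hq2.trans hq4.symm),
              P_v2u (hq4.trans hq1.symm), P_v2u (hq4.trans hq2.symm),
              P_v1v1 (hq3.trans hq3.symm), P_v2v2 (hq4.trans hq4.symm),
              P_v1v2, P_v2v1, if_pos rfl, if_neg hune, if_neg hune',
              hz1, hz2, hzv, hc1, hc2, negS_c, negS_z, map_neg, map_neg_eq_map, norm_neg,
              neg_div] <;>
            push_cast <;> (try ring)
          all_goals (
            first
            | linear_combination (2 : ℂ) * hS + ((halfSq a.1.2 : ℝ) : ℂ) * ((halfSq a.1.2 : ℝ) : ℂ) * hDC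
            | linear_combination (-(((halfSq a.1.2 : ℝ) : ℂ) * ((halfSq a.1.2 : ℝ) : ℂ))) * hDC
            | linear_combination (2 : ℂ) * hS
            | linear_combination (2 : ℂ) * hS + 2 * ((halfSq a.1.2 : ℝ) : ℂ) * ((halfSq a.1.2 : ℝ) : ℂ) * hDC)
    · have h0 : ∀ w'' ∈ {w'' : sphY | sphPsi w'' = sphPsi w},
          sphP w w'' * sphP w'' w' = 0 := by
        intro w'' hw''
        have hne : sphPsi w'' ≠ sphPsi w' := fun h => hw' (h.symm.trans hw'')
        rw [P_ne hne, mul_zero]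
      rw [finsum_mem_congr rfl h0]
      rw [P_ne (fun h => hw' h.symm)]
      simp
  · -- (iv) nontriviality
    intro x
    induction x using Quot.ind with
    | _ a =>
      by_cases hz : a.1.2 = 0
      · have hc : a.1.1 ≠ 0 := by
          intro h0
          have hm := memS a
          rw [hz, h0] at hm
          simp at hm
        refine ⟨Sum.inl ⟨a, hc⟩, Sum.inl ⟨a, hc⟩, rfl, rfl, ?_⟩
        rw [P_uu rfl, if_pos rfl,
          show ((⟨a, hc⟩ : sphU) : TwoSphere).1.2 = a.1.2 from rfl, hz]
        norm_num
      · refine ⟨Sum.inr (Sum.inl (betaV a hz)), Sum.inr (Sum.inl (betaV a hz)),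
          q_alpha_betaV a hz, q_alpha_betaV a hz, ?_⟩
        rw [P_v1v1 rfl, if_pos rfl,
          show ((betaV a hz : TwoSphere) : ℂ × ℝ).2 = a.1.2 from rfl]
        simpa [Complex.ofReal_eq_zero, abs_eq_zero] using hz
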